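/- arXiv:1504.05868 — 3 statements merged into one kernel-verified Lean document; each statement's English description precedes it below -/
import Mathlib

section
/- The conditional density p(m''|m') satisfies the invariance condition ∫_{m₀}^∞ p(m')ρ(m')p(m''|m') dm' = n p(m'') for every m'' ≥ m₀, where n = βκ/(β−a). In other words, averaging the conditional triggered-magnitude density over triggering magnitudes weighted by Gutenberg-Richter times productivity recovers the Gutenberg-Richter law. -/
open MeasureTheory

lemma exp_shift_integrableOn (c m₀ : ℝ) (hc : 0 < c) :
    IntegrableOn (fun x => Real.exp (-c * (x - m₀))) (Set.Ioi m₀) := by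
  have h : (fun x => Real.exp (-c * (x - m₀)))
      = fun x => Real.exp (c * m₀) * Real.exp (-c * x) := by
    funext x
    rw [← Real.exp_add]
    ring_nf
  rw [h]
  exact (exp_neg_integrableOn_Ioi m₀ hc).const_mul _

lemma integral_exp_shift (c m₀ : ℝ) (hc : 0 < c) :
    ∫ x in Set.Ioi m₀, Real.exp (-c * (x - m₀)) = 1 / c := by
  have hlin : Filter.Tendsto (fun x : ℝ => -c * (x - m₀)) Filter.atTop Filter.atBot := by
    have h0 : Filter.Tendsto (fun x : ℝ => x - m₀) Filter.atTop Filter.atTop :=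
      Filter.tendsto_atTop_add_const_right _ (-m₀) Filter.tendsto_id
    have h1 : Filter.Tendsto (fun x : ℝ => c * (x - m₀)) Filter.atTop Filter.atTop :=
      Filter.Tendsto.const_mul_atTop hc h0
    have h2 := Filter.tendsto_neg_atTop_atBot.comp h1
    simpa [Function.comp_def, neg_mul] using h2
  have htend : Filter.Tendsto (fun x => -Real.exp (-c * (x - m₀)) / c)
      Filter.atTop (nhds 0) := by
    have h3 := (Real.tendsto_exp_atBot.comp hlin).neg.div_const c
    simpa [Function.comp_def] using h3
  have key := integral_Ioi_of_hasDerivAt_of_tendsto'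
    (f := fun x => -Real.exp (-c * (x - m₀)) / c)
    (f' := fun x => Real.exp (-c * (x - m₀))) (a := m₀) (m := 0)
    (fun x _ => by
      have hd : HasDerivAt (fun y : ℝ => -c * (y - m₀)) (-c) x := by
        simpa using (((hasDerivAt_id x).sub_const m₀).const_mul (-c))
      have h2 := (hd.exp).neg.div_const c
      convert h2 using 1
      · rfl
      · rfl
      · rw [mul_neg, neg_neg, mul_div_assoc, div_self hc.ne', mul_one])
    (exp_shift_integrableOn c m₀ hc)
    htend
  rw [key]
  field_simp
  simp

theorem invariance_condition (β a κ C₁ m₀ : ℝ) (ha : 0 < a) (hba : a < β)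
    (hκ : 0 < κ) (hC₁ : 0 ≤ C₁) (hC₁' : C₁ < 1) :
    ∀ m'' : ℝ, m₀ ≤ m'' →
      ∫ m' in Set.Ioi m₀,
        (β * Real.exp (-β * (m' - m₀))) * (κ * Real.exp (a * (m' - m₀))) *
          ((β * Real.exp (-β * (m'' - m₀))) *
            (1 + C₁ * (1 - 2 * Real.exp (-(β - a) * (m' - m₀)))
                   * (1 - 2 * Real.exp (-β * (m'' - m₀)))))
        = (β * κ / (β - a)) * (β * Real.exp (-β * (m'' - m₀))) := by
  intro m'' _
  set c : ℝ := β - a with hc_def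
  have hc : 0 < c := sub_pos.mpr hba
  set P : ℝ := β * Real.exp (-β * (m'' - m₀)) with hP
  set Y : ℝ := 1 - 2 * Real.exp (-β * (m'' - m₀)) with hY
  set A : ℝ := β * κ * P * (1 + C₁ * Y) with hA
  set B : ℝ := -(2 * β * κ * P * C₁ * Y) with hB
  have hfun : ∀ x : ℝ,
      (β * Real.exp (-β * (x - m₀))) * (κ * Real.exp (a * (x - m₀))) *
        (P * (1 + C₁ * (1 - 2 * Real.exp (-c * (x - m₀))) * Y))
      = A * Real.exp (-c * (x - m₀)) + B * Real.exp (-(2 * c) * (x - m₀)) := by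
    intro x
    have e1 : Real.exp (-β * (x - m₀)) * Real.exp (a * (x - m₀))
        = Real.exp (-c * (x - m₀)) := by
      rw [← Real.exp_add, hc_def]; ring_nf
    have e2 : Real.exp (-c * (x - m₀)) * Real.exp (-c * (x - m₀))
        = Real.exp (-(2 * c) * (x - m₀)) := by
      rw [← Real.exp_add]; ring_nf
    calc (β * Real.exp (-β * (x - m₀))) * (κ * Real.exp (a * (x - m₀))) *
          (P * (1 + C₁ * (1 - 2 * Real.exp (-c * (x - m₀))) * Y))
        = β * κ * (Real.exp (-β * (x - m₀)) * Real.exp (a * (x - m₀))) *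
          (P * (1 + C₁ * (1 - 2 * Real.exp (-c * (x - m₀))) * Y)) := by ring
      _ = β * κ * Real.exp (-c * (x - m₀)) *
          (P * (1 + C₁ * (1 - 2 * Real.exp (-c * (x - m₀))) * Y)) := by rw [e1]
      _ = A * Real.exp (-c * (x - m₀))
          + B * (Real.exp (-c * (x - m₀)) * Real.exp (-c * (x - m₀))) := by
            rw [hA, hB]; ring
      _ = A * Real.exp (-c * (x - m₀)) + B * Real.exp (-(2 * c) * (x - m₀)) := by rw [e2]
  have hi1 := (exp_shift_integrableOn c m₀ hc).const_mul A
  have hi2 := (exp_shift_integrableOn (2 * c) m₀ (by positivity)).const_mul B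
  calc ∫ m' in Set.Ioi m₀,
        (β * Real.exp (-β * (m' - m₀))) * (κ * Real.exp (a * (m' - m₀))) *
          (P * (1 + C₁ * (1 - 2 * Real.exp (-c * (m' - m₀))) * Y))
      = ∫ x in Set.Ioi m₀,
          (A * Real.exp (-c * (x - m₀)) + B * Real.exp (-(2 * c) * (x - m₀))) := by
        exact integral_congr_ae (Filter.Eventually.of_forall fun x => hfun x)
    _ = (∫ x in Set.Ioi m₀, A * Real.exp (-c * (x - m₀)))
        + ∫ x in Set.Ioi m₀, B * Real.exp (-(2 * c) * (x - m₀)) :=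
        integral_add hi1 hi2
    _ = A * (1 / c) + B * (1 / (2 * c)) := by
        rw [integral_const_mul, integral_const_mul, integral_exp_shift c m₀ hc,
          integral_exp_shift (2 * c) m₀ (by positivity)]
    _ = (β * κ / c) * P := by
        rw [hA, hB]
        field_simp
        ring
end

section
/- The integral I_B(m'') = ∫_m^∞ p(m')ρ(m')p(m''|m') dm' equals p(m'')nH + p(m'')C₁(1 − 2e^{−β(m''−m₀)}) n H(1−H), where H = e^{−(β−a)(m−m₀)} and n = βκ/(β−a). -/
open MeasureTheory Set Real

lemma aux_integrable (c m₀ m : ℝ) (hc : 0 < c) :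
    IntegrableOn (fun x => Real.exp (-c * (x - m₀))) (Set.Ioi m) := by
  have h := (exp_neg_integrableOn_Ioi m hc).const_mul (Real.exp (c * m₀))
  refine (integrableOn_congr_fun (fun x _ => ?_) measurableSet_Ioi).mpr h
  rw [← Real.exp_add]; ring_nf

lemma aux_int (c m₀ m : ℝ) (hc : 0 < c) :
    ∫ x in Set.Ioi m, Real.exp (-c * (x - m₀)) = Real.exp (-c * (m - m₀)) / c := by
  have hderiv : ∀ x ∈ Set.Ici m, HasDerivAt (fun x => -Real.exp (-c * (x - m₀)) / c)
      (Real.exp (-c * (x - m₀))) x := by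
    intro x _
    have h1 : HasDerivAt (fun x : ℝ => -c * (x - m₀)) (-c) x := by
      simpa using ((hasDerivAt_id x).sub_const m₀).const_mul (-c)
    have := (h1.exp.neg).div_const c
    refine this.congr_deriv ?_
    rw [div_eq_iff hc.ne']; ring
  have htend : Filter.Tendsto (fun x => -Real.exp (-c * (x - m₀)) / c) Filter.atTop (nhds 0) := by
    have h2 : Filter.Tendsto (fun x : ℝ => -c * (x - m₀)) Filter.atTop Filter.atBot := by
      have : Filter.Tendsto (fun x : ℝ => x - m₀) Filter.atTop Filter.atTop :=
        Filter.tendsto_atTop_add_const_right _ _ Filter.tendsto_id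
      simpa [mul_comm] using this.atTop_mul_const_of_neg (neg_neg_iff_pos.mpr hc)
    have := (Real.tendsto_exp_atBot.comp h2).neg.div_const c
    simpa using this
  have := integral_Ioi_of_hasDerivAt_of_tendsto' hderiv (aux_integrable c m₀ m hc) htend
  rw [this]; ring

theorem I_B_formula (β a κ C₁ m₀ m : ℝ) (ha : 0 < a) (hba : a < β) (hκ : 0 < κ)
    (hC₁ : 0 ≤ C₁) (hC₁' : C₁ < 1) (hm : m₀ ≤ m) :
    ∀ m'' : ℝ, m₀ ≤ m'' →
      ∫ m' in Set.Ioi m,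
        (β * Real.exp (-β * (m' - m₀))) * (κ * Real.exp (a * (m' - m₀))) *
          ((β * Real.exp (-β * (m'' - m₀))) *
            (1 + C₁ * (1 - 2 * Real.exp (-(β - a) * (m' - m₀)))
                   * (1 - 2 * Real.exp (-β * (m'' - m₀)))))
        = (β * Real.exp (-β * (m'' - m₀))) * (β * κ / (β - a)) *
            Real.exp (-(β - a) * (m - m₀))
          + (β * Real.exp (-β * (m'' - m₀))) * C₁ *
            (1 - 2 * Real.exp (-β * (m'' - m₀))) * (β * κ / (β - a)) *
            Real.exp (-(β - a) * (m - m₀)) * (1 - Real.exp (-(β - a) * (m - m₀))) := by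
  intro m'' _
  have hc : 0 < β - a := sub_pos.mpr hba
  set c : ℝ := β - a with hcdef
  set P : ℝ := β * Real.exp (-β * (m'' - m₀)) with hP
  set B : ℝ := 1 - 2 * Real.exp (-β * (m'' - m₀)) with hB
  set K1 : ℝ := β * κ * P * (1 + C₁ * B) with hK1
  set K2 : ℝ := -(2 * β * κ * P * C₁ * B) with hK2
  have hfun : ∀ x ∈ Set.Ioi m,
      (β * Real.exp (-β * (x - m₀))) * (κ * Real.exp (a * (x - m₀))) *
        (P * (1 + C₁ * (1 - 2 * Real.exp (-c * (x - m₀))) * B))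
      = K1 * Real.exp (-c * (x - m₀)) + K2 * Real.exp (-(2 * c) * (x - m₀)) := by
    intro x _
    have h1 : Real.exp (-β * (x - m₀)) * Real.exp (a * (x - m₀))
        = Real.exp (-c * (x - m₀)) := by
      rw [← Real.exp_add]; congr 1; rw [hcdef]; ring
    have h2 : Real.exp (-c * (x - m₀)) * Real.exp (-c * (x - m₀))
        = Real.exp (-(2 * c) * (x - m₀)) := by
      rw [← Real.exp_add]; congr 1; ring
    rw [hK1, hK2]
    linear_combination (β * κ * P * (1 + C₁ * B)) * h1
      - 2 * β * κ * P * C₁ * B * Real.exp (-c * (x - m₀)) * h1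
      - 2 * β * κ * P * C₁ * B * h2
  rw [MeasureTheory.setIntegral_congr_fun measurableSet_Ioi hfun,
    MeasureTheory.integral_add ((aux_integrable c m₀ m hc).const_mul K1)
      ((aux_integrable (2 * c) m₀ m (by linarith)).const_mul K2),
    MeasureTheory.integral_const_mul, MeasureTheory.integral_const_mul,
    aux_int c m₀ m hc, aux_int (2 * c) m₀ m (by linarith)]
  have h3 : Real.exp (-(2 * c) * (m - m₀)) = Real.exp (-c * (m - m₀)) ^ 2 := by
    rw [← Real.exp_nat_mul]; congr 1; ring
  rw [h3, hK1, hK2, hP]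
  field_simp
  ring
end

section
/- Let Φ be a probability density on [0,∞), a(t) = ∫_t^∞ Φ, and suppose N̄ and N̄₋ are integrable functions satisfying N̄(t,τ) = n(Φ∗N̄(·,τ))(t) + n∫₀^τ Φ(t+τ−x)N̄₋(x) dx for all t ≥ 0, with 0 < n < 1. Then ∫₀^∞ N̄(t,τ) dt = n/(1−n) · ∫₀^τ a(τ−x)N̄₋(x) dx. -/
open MeasureTheory Set

/-- Shift lemma for integrals over `Ioi`. -/
lemma shift_integral_Ioi (f : ℝ → ℝ) (c d : ℝ) :
    (∫ s in Ioi c, f (s + d)) = ∫ y in Ioi (c + d), f y := by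
  rw [← integral_indicator measurableSet_Ioi, ← integral_indicator measurableSet_Ioi,
    ← integral_add_right_eq_self ((Ioi (c + d)).indicator f) d]
  congr 1
  ext s
  by_cases h : c < s
  · rw [indicator_of_mem (mem_Ioi.mpr h), indicator_of_mem (mem_Ioi.mpr (by linarith))]
  · rw [indicator_of_notMem (by simpa using h),
      indicator_of_notMem (by simp only [mem_Ioi]; intro hh; exact h (by linarith))]

theorem renewal_integral_general (Φ : ℝ → ℝ) (N Nm : ℝ → ℝ) (n τ : ℝ)
    (hΦpos : ∀ t, 0 ≤ t → 0 ≤ Φ t)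
    (hΦint : MeasureTheory.IntegrableOn Φ (Set.Ioi 0))
    (hΦ1 : ∫ t in Set.Ioi (0:ℝ), Φ t = 1)
    (hn0 : 0 < n) (hn1 : n < 1) (hτ : 0 ≤ τ)
    (hNint : MeasureTheory.IntegrableOn N (Set.Ioi 0))
    (hNmint : MeasureTheory.IntegrableOn Nm (Set.Icc 0 τ))
    (heq : ∀ t : ℝ, 0 ≤ t →
      N t = n * (∫ x in (0:ℝ)..t, Φ (t - x) * N x)
        + n * ∫ x in (0:ℝ)..τ, Φ (t + τ - x) * Nm x) :
    ∫ t in Set.Ioi (0:ℝ), N t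
      = n / (1 - n) *
        ∫ x in (0:ℝ)..τ, (∫ y in Set.Ioi (τ - x), Φ y) * Nm x := by
  classical
  set L : ℝ →L[ℝ] ℝ →L[ℝ] ℝ := ContinuousLinearMap.mul ℝ ℝ with hLdef
  set f : ℝ → ℝ := (Ioi (0:ℝ)).indicator Φ with hfdef
  set g : ℝ → ℝ := (Ioi (0:ℝ)).indicator N with hgdef
  set h : ℝ → ℝ := (Icc (0:ℝ) τ).indicator Nm with hhdef
  have hf : Integrable f := hΦint.integrable_indicator measurableSet_Ioi
  have hg : Integrable g := hNint.integrable_indicator measurableSet_Ioi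
  have hh : Integrable h := hNmint.integrable_indicator measurableSet_Icc
  have hfint : ∫ x, f x = 1 := by rw [hfdef, integral_indicator measurableSet_Ioi]; exact hΦ1
  have hgint : ∫ x, g x = ∫ t in Ioi (0:ℝ), N t := by
    rw [hgdef, integral_indicator measurableSet_Ioi]
  -- the two convolutions
  set c1 : ℝ → ℝ := convolution g f L volume with hc1def
  set c2 : ℝ → ℝ := convolution h f L volume with hc2def
  have hc1 : Integrable c1 := hg.integrable_convolution L hf
  have hc2 : Integrable c2 := hh.integrable_convolution L hf
  have hc1app : ∀ t, c1 t = ∫ x, g x * f (t - x) := by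
    intro t; rw [hc1def, convolution_def]; simp [hLdef]
  have hc2app : ∀ t, c2 t = ∫ x, h x * f (t - x) := by
    intro t; rw [hc2def, convolution_def]; simp [hLdef]
  -- key pointwise identity on Ioi 0
  have key : ∀ t ∈ Ioi (0:ℝ), N t = n * c1 t + n * c2 (t + τ) := by
    intro t ht
    rw [mem_Ioi] at ht
    have key1 : (∫ x in (0:ℝ)..t, Φ (t - x) * N x) = c1 t := by
      rw [hc1app, intervalIntegral.integral_of_le ht.le, integral_Ioc_eq_integral_Ioo,
        ← integral_indicator measurableSet_Ioo]
      congr 1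
      ext x
      by_cases h1 : 0 < x
      · by_cases h2 : x < t
        · rw [indicator_of_mem (by exact ⟨h1, h2⟩), hgdef, hfdef,
            indicator_of_mem (mem_Ioi.mpr h1),
            indicator_of_mem (mem_Ioi.mpr (by linarith : (0:ℝ) < t - x))]
          ring
        · rw [indicator_of_notMem (by simp only [mem_Ioo]; tauto), hfdef,
            indicator_of_notMem (by simp only [mem_Ioi]; intro hc; exact h2 (by linarith)),
            mul_zero]
      · rw [indicator_of_notMem (by simp only [mem_Ioo]; tauto), hgdef,
          indicator_of_notMem (by simpa using h1), zero_mul]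
    have key2 : (∫ x in (0:ℝ)..τ, Φ (t + τ - x) * Nm x) = c2 (t + τ) := by
      rw [hc2app]
      have : ∀ x : ℝ, h x * f (t + τ - x)
          = (Icc (0:ℝ) τ).indicator (fun x => Nm x * f (t + τ - x)) x := by
        intro x
        rw [hhdef, indicator_mul_left]
      simp_rw [this]
      rw [integral_indicator measurableSet_Icc, integral_Icc_eq_integral_Ioc,
        intervalIntegral.integral_of_le hτ]
      refine (setIntegral_congr_fun measurableSet_Ioc fun x hx => ?_).symm
      obtain ⟨hx1, hx2⟩ := hx
      rw [hfdef, indicator_of_mem (mem_Ioi.mpr (by linarith : (0:ℝ) < t + τ - x))]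
      ring
    rw [heq t ht.le, key1, key2]
  -- integrate the identity over Ioi 0
  have hstep : ∫ t in Ioi (0:ℝ), N t
      = n * (∫ t in Ioi (0:ℝ), c1 t) + n * ∫ t in Ioi (0:ℝ), c2 (t + τ) := by
    rw [setIntegral_congr_fun measurableSet_Ioi key]
    rw [integral_add ((hc1.restrict.const_mul n))
      (((hc2.comp_add_right τ).restrict).const_mul n),
      integral_const_mul, integral_const_mul]
  -- first integral: c1 vanishes on Iic 0, total integral is (∫ g)(∫ f)
  have hc1zero : ∀ t : ℝ, t ∉ Ioi (0:ℝ) → c1 t = 0 := by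
    intro t ht
    rw [mem_Ioi, not_lt] at ht
    rw [hc1app]
    have : ∀ x : ℝ, g x * f (t - x) = 0 := by
      intro x
      by_cases h1 : 0 < x
      · rw [hfdef, indicator_of_notMem
          (by simp only [mem_Ioi]; intro hc; linarith), mul_zero]
      · rw [hgdef, indicator_of_notMem (by simpa using h1), zero_mul]
    simp_rw [this]
    exact integral_zero _ _
  have hI1 : (∫ t in Ioi (0:ℝ), c1 t) = ∫ t in Ioi (0:ℝ), N t := by
    rw [setIntegral_eq_integral_of_forall_compl_eq_zero hc1zero, hc1def,
      integral_convolution L hg hf, hgint, hfint]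
    simp [hLdef]
  -- second integral: shift then Fubini
  have hshift : (∫ t in Ioi (0:ℝ), c2 (t + τ)) = ∫ s in Ioi τ, c2 s := by
    rw [shift_integral_Ioi c2 0 τ, zero_add]
  -- Fubini
  have huint : Integrable (fun p : ℝ × ℝ => h p.2 * f (p.1 - p.2))
      ((volume.restrict (Ioi τ)).prod volume) := by
    have h0 : Integrable (fun p : ℝ × ℝ => h p.2 * f (p.1 - p.2)) (volume.prod volume) := by
      have := hh.convolution_integrand L hf
      simpa [hLdef] using this
    have hmeq : ((volume : Measure ℝ).restrict (Ioi τ)).prod (volume : Measure ℝ)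
        = ((volume : Measure ℝ).prod volume).restrict (Ioi τ ×ˢ univ) := by
      rw [← Measure.prod_restrict, Measure.restrict_univ]
    rw [hmeq]
    exact h0.restrict
  have hfub : (∫ s in Ioi τ, c2 s)
      = ∫ x, h x * ∫ y in Ioi (τ - x), f y := by
    simp_rw [hc2app]
    rw [integral_integral_swap huint]
    congr 1
    ext x
    rw [integral_const_mul]
    congr 1
    have : ∀ s : ℝ, f (s - x) = f (s + (-x)) := by intro s; rw [sub_eq_add_neg]
    simp_rw [this]
    rw [shift_integral_Ioi f τ (-x), show τ + -x = τ - x from by ring]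
  -- convert to the target integral
  have hJ : (∫ x, h x * ∫ y in Ioi (τ - x), f y)
      = ∫ x in (0:ℝ)..τ, (∫ y in Ioi (τ - x), Φ y) * Nm x := by
    have : ∀ x : ℝ, h x * (∫ y in Ioi (τ - x), f y)
        = (Icc (0:ℝ) τ).indicator (fun x => Nm x * ∫ y in Ioi (τ - x), f y) x := by
      intro x; rw [hhdef, indicator_mul_left]
    simp_rw [this]
    rw [integral_indicator measurableSet_Icc, integral_Icc_eq_integral_Ioc,
      intervalIntegral.integral_of_le hτ]
    refine setIntegral_congr_fun measurableSet_Ioc fun x hx => ?_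
    obtain ⟨hx1, hx2⟩ := hx
    have hΦf : (∫ y in Ioi (τ - x), f y) = ∫ y in Ioi (τ - x), Φ y := by
      refine setIntegral_congr_fun measurableSet_Ioi fun y hy => ?_
      rw [mem_Ioi] at hy
      rw [hfdef, indicator_of_mem (mem_Ioi.mpr (by linarith : (0:ℝ) < y))]
    rw [hΦf]; ring
  -- put everything together
  set I := ∫ t in Ioi (0:ℝ), N t with hIdef
  set J := ∫ x in (0:ℝ)..τ, (∫ y in Ioi (τ - x), Φ y) * Nm x with hJdef
  have hfinal : I = n * I + n * J := by
    calc I = n * (∫ t in Ioi (0:ℝ), c1 t) + n * ∫ t in Ioi (0:ℝ), c2 (t + τ) := hstep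
    _ = n * I + n * J := by rw [hI1, hshift, hfub, hJ]
  have h1n : (1 : ℝ) - n ≠ 0 := by linarith
  field_simp
  linarith [hfinal]
end
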